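/- Fix T > 0, t₀ ∈ (0,∞), a probability measure μ₀ on ℝ^d with finite first moment and x₀ ∈ ℝ^d. For i = 1, 2 let g_i : [0,T] → ℝ^d be continuous with g_i(0) = 0 and let f_i be the unique continuous solution of f_i(t) = x₀ − ∫₀ᵗ ∇V(f_i(s)) ds − ∫₀ᵗ (t₀/(t₀+s))·∇F*μ₀(f_i(s)) ds − ∫₀ᵗ (1/(t₀+s))·∫₀ˢ ∇F(f_i(s)−f_i(u)) du ds + g_i(t). If sup_{t∈[0,T]} |g₁(t)−g₂(t)| ≤ δ, then sup_{t∈[0,T]} |f₁(t)−f₂(t)| ≤ δ·exp{(L_V + (1 + T/t₀)·L_F)·T}. In particular the solution map g ↦ f is continuous on C([0,T]; ℝ^d). -/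

import Mathlib

open MeasureTheory Set

noncomputable section

abbrev Ed (d : ℕ) : Type := EuclideanSpace ℝ (Fin d)

/-- `f` is a continuous solution on `[0,T]` of the integral equation for the
generalized self-interacting diffusion with forcing path `g`. -/
def IsSIDSolution {d : ℕ} (V F : Ed d → ℝ) (T t₀ : ℝ) (μ₀ : Measure (Ed d))
    (x₀ : Ed d) (g : ℝ → Ed d) (f : ℝ → Ed d) : Prop :=
  ContinuousOn f (Icc 0 T) ∧
  ∀ t ∈ Icc (0:ℝ) T,
    f t = x₀ - (∫ s in (0:ℝ)..t, gradient V (f s))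
      - (∫ s in (0:ℝ)..t, (t₀ / (t₀ + s)) • (∫ u, gradient F (f s - u) ∂μ₀))
      - (∫ s in (0:ℝ)..t, (1 / (t₀ + s)) • (∫ u in (0:ℝ)..s, gradient F (f s - f u)))
      + g t

set_option maxHeartbeats 1000000 in
/-- continuity (with an explicit Grönwall bound) of the solution map
`g ↦ f` of the self-interacting integral equation. -/
theorem stmt2 {d : ℕ} (hd : 1 ≤ d)
    (V F : Ed d → ℝ) (hV : ContDiff ℝ 2 V) (hF : ContDiff ℝ 2 F)
    (LV LF : ℝ) (hLV : 0 ≤ LV) (hLF : 0 ≤ LF)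
    (hVlip : ∀ x y : Ed d, ‖gradient V x - gradient V y‖ ≤ LV * ‖x - y‖)
    (hFlip : ∀ x y : Ed d, ‖gradient F x - gradient F y‖ ≤ LF * ‖x - y‖)
    (T : ℝ) (hT : 0 < T) (t₀ : ℝ) (ht₀ : 0 < t₀)
    (μ₀ : Measure (Ed d)) (hprob : IsProbabilityMeasure μ₀)
    (hμ₀ : Integrable (fun u => ‖u‖) μ₀)
    (x₀ : Ed d) (g₁ g₂ : ℝ → Ed d)
    (hg₁ : ContinuousOn g₁ (Icc 0 T)) (hg₁0 : g₁ 0 = 0)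
    (hg₂ : ContinuousOn g₂ (Icc 0 T)) (hg₂0 : g₂ 0 = 0)
    (f₁ f₂ : ℝ → Ed d)
    (hf₁ : IsSIDSolution V F T t₀ μ₀ x₀ g₁ f₁)
    (hf₂ : IsSIDSolution V F T t₀ μ₀ x₀ g₂ f₂)
    (δ : ℝ) (hδ : ∀ t ∈ Icc (0:ℝ) T, ‖g₁ t - g₂ t‖ ≤ δ) :
    ∀ t ∈ Icc (0:ℝ) T,
      ‖f₁ t - f₂ t‖ ≤ δ * Real.exp ((LV + (1 + T / t₀) * LF) * T) := by
  haveI := hprob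
  obtain ⟨hf₁c, hf₁eq⟩ := hf₁
  obtain ⟨hf₂c, hf₂eq⟩ := hf₂
  have hδ0 : 0 ≤ δ := le_trans (norm_nonneg _) (hδ 0 ⟨le_refl 0, hT.le⟩)
  set K : ℝ := LV + (1 + T / t₀) * LF with hKdef
  have hTdiv : 0 ≤ T / t₀ := div_nonneg hT.le ht₀.le
  have hK0 : 0 ≤ K := by
    rw [hKdef]
    have h1 : 0 ≤ (1 + T / t₀) * LF := mul_nonneg (by linarith) hLF
    linarith
  -- clamp to [0, T]
  set c : ℝ → ℝ := fun r => max 0 (min T r) with hcdef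
  have hc : Continuous c := continuous_const.max (continuous_const.min continuous_id)
  have hcm : ∀ r, c r ∈ Icc (0:ℝ) T := fun r => ⟨le_max_left _ _, max_le hT.le (min_le_left _ _)⟩
  have hceq : ∀ r ∈ Icc (0:ℝ) T, c r = r := by
    intro r hr
    simp only [hcdef]
    rw [min_eq_right hr.2, max_eq_right hr.1]
  set h₁ : ℝ → Ed d := fun r => f₁ (c r) with hh₁def
  set h₂ : ℝ → Ed d := fun r => f₂ (c r) with hh₂def
  have hh₁c : Continuous h₁ := hf₁c.comp_continuous hc hcm
  have hh₂c : Continuous h₂ := hf₂c.comp_continuous hc hcm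
  have hh₁e : ∀ r ∈ Icc (0:ℝ) T, h₁ r = f₁ r := by
    intro r hr; simp only [hh₁def]; rw [hceq r hr]
  have hh₂e : ∀ r ∈ Icc (0:ℝ) T, h₂ r = f₂ r := by
    intro r hr; simp only [hh₂def]; rw [hceq r hr]
  set φ : ℝ → ℝ := fun r => ‖h₁ r - h₂ r‖ with hφdef
  have hφc : Continuous φ := (hh₁c.sub hh₂c).norm
  have hφ0 : ∀ r, 0 ≤ φ r := fun r => norm_nonneg _
  -- continuity of gradients
  have hgVc : Continuous (gradient V) := by
    refine (LipschitzWith.of_dist_le_mul (K := Real.toNNReal LV) fun x y => ?_).continuous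
    rw [dist_eq_norm, dist_eq_norm, Real.coe_toNNReal LV hLV]
    exact hVlip x y
  have hgFc : Continuous (gradient F) := by
    refine (LipschitzWith.of_dist_le_mul (K := Real.toNNReal LF) fun x y => ?_).continuous
    rw [dist_eq_norm, dist_eq_norm, Real.coe_toNNReal LF hLF]
    exact hFlip x y
  -- the convolution term
  set G : Ed d → Ed d := fun x => ∫ u, gradient F (x - u) ∂μ₀ with hGdef
  have hGint : ∀ x : Ed d, Integrable (fun u => gradient F (x - u)) μ₀ := by
    intro x
    have hmeas : AEStronglyMeasurable (fun u : Ed d => gradient F (x - u)) μ₀ :=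
      (hgFc.comp (continuous_const.sub continuous_id)).aestronglyMeasurable
    refine Integrable.mono' ((integrable_const ‖gradient F x‖).add (hμ₀.const_mul LF)) hmeas ?_
    filter_upwards with u
    have h2 := hFlip (x - u) x
    have h3 : ‖gradient F (x - u)‖ - ‖gradient F x‖ ≤ ‖gradient F (x - u) - gradient F x‖ :=
      norm_sub_norm_le _ _
    have h4 : ‖x - u - x‖ = ‖u‖ := by rw [show x - u - x = -u by abel, norm_neg]
    rw [h4] at h2
    simpa using by linarith
  have hGlip : ∀ x y : Ed d, ‖G x - G y‖ ≤ LF * ‖x - y‖ := by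
    intro x y
    simp only [hGdef]
    rw [← integral_sub (hGint x) (hGint y)]
    have hpt : ∀ u, ‖gradient F (x - u) - gradient F (y - u)‖ ≤ LF * ‖x - y‖ := by
      intro u
      have h2 := hFlip (x - u) (y - u)
      rwa [show x - u - (y - u) = x - y by abel] at h2
    calc ‖∫ u, (gradient F (x - u) - gradient F (y - u)) ∂μ₀‖
        ≤ LF * ‖x - y‖ * (μ₀ univ).toReal :=
          norm_integral_le_of_norm_le_const (Filter.Eventually.of_forall hpt)
      _ = LF * ‖x - y‖ := by simp
  have hGc : Continuous G := by
    refine (LipschitzWith.of_dist_le_mul (K := Real.toNNReal LF) fun x y => ?_).continuous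
    rw [dist_eq_norm, dist_eq_norm, Real.coe_toNNReal LF hLF]
    exact hGlip x y
  -- the self-interaction terms
  set P₁ : ℝ → Ed d := fun s => ∫ u in (0:ℝ)..s, gradient F (h₁ s - h₁ u) with hP₁def
  set P₂ : ℝ → Ed d := fun s => ∫ u in (0:ℝ)..s, gradient F (h₂ s - h₂ u) with hP₂def
  have hP₁c : Continuous P₁ := by
    have hk : Continuous (Function.uncurry fun s u => gradient F (h₁ s - h₁ u)) :=
      hgFc.comp ((hh₁c.comp continuous_fst).sub (hh₁c.comp continuous_snd))
    exact intervalIntegral.continuous_parametric_intervalIntegral_of_continuous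
      (μ := volume) (a₀ := (0:ℝ)) hk continuous_id
  have hP₂c : Continuous P₂ := by
    have hk : Continuous (Function.uncurry fun s u => gradient F (h₂ s - h₂ u)) :=
      hgFc.comp ((hh₂c.comp continuous_fst).sub (hh₂c.comp continuous_snd))
    exact intervalIntegral.continuous_parametric_intervalIntegral_of_continuous
      (μ := volume) (a₀ := (0:ℝ)) hk continuous_id
  set b₁ : ℝ → Ed d := fun s => (t₀ / (t₀ + s)) • G (h₁ s) with hb₁def
  set b₂ : ℝ → Ed d := fun s => (t₀ / (t₀ + s)) • G (h₂ s) with hb₂def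
  set c₁ : ℝ → Ed d := fun s => (1 / (t₀ + s)) • P₁ s with hc₁def
  set c₂ : ℝ → Ed d := fun s => (1 / (t₀ + s)) • P₂ s with hc₂def
  have hden : ∀ s ∈ Icc (0:ℝ) T, t₀ + s ≠ 0 := fun s hs => by
    have := hs.1; positivity
  have hdenc : ContinuousOn (fun s : ℝ => t₀ + s) (Icc 0 T) :=
    (continuous_const.add continuous_id).continuousOn
  have hb₁cont : ContinuousOn b₁ (Icc 0 T) :=
    (continuousOn_const.div hdenc hden).smul (hGc.comp hh₁c).continuousOn
  have hb₂cont : ContinuousOn b₂ (Icc 0 T) :=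
    (continuousOn_const.div hdenc hden).smul (hGc.comp hh₂c).continuousOn
  have hc₁cont : ContinuousOn c₁ (Icc 0 T) :=
    (continuousOn_const.div hdenc hden).smul hP₁c.continuousOn
  have hc₂cont : ContinuousOn c₂ (Icc 0 T) :=
    (continuousOn_const.div hdenc hden).smul hP₂c.continuousOn
  -- rewritten integral equations
  have heq : ∀ t ∈ Icc (0:ℝ) T,
      f₁ t - f₂ t
        = -((∫ s in (0:ℝ)..t, gradient V (h₁ s)) - (∫ s in (0:ℝ)..t, gradient V (h₂ s)))
          - ((∫ s in (0:ℝ)..t, b₁ s) - (∫ s in (0:ℝ)..t, b₂ s))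
          - ((∫ s in (0:ℝ)..t, c₁ s) - (∫ s in (0:ℝ)..t, c₂ s))
          + (g₁ t - g₂ t) := by
    intro t ht
    have hmem : ∀ s ∈ uIcc (0:ℝ) t, s ∈ Icc (0:ℝ) T := by
      intro s hs
      rw [uIcc_of_le ht.1] at hs
      exact ⟨hs.1, hs.2.trans ht.2⟩
    have e1 : (∫ s in (0:ℝ)..t, gradient V (f₁ s)) = ∫ s in (0:ℝ)..t, gradient V (h₁ s) :=
      intervalIntegral.integral_congr fun s hs => by rw [hh₁e s (hmem s hs)]
    have e1' : (∫ s in (0:ℝ)..t, gradient V (f₂ s)) = ∫ s in (0:ℝ)..t, gradient V (h₂ s) :=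
      intervalIntegral.integral_congr fun s hs => by rw [hh₂e s (hmem s hs)]
    have e2 : (∫ s in (0:ℝ)..t, (t₀ / (t₀ + s)) • (∫ u, gradient F (f₁ s - u) ∂μ₀))
        = ∫ s in (0:ℝ)..t, b₁ s :=
      intervalIntegral.integral_congr fun s hs => by
        simp only [hb₁def, hGdef]
        rw [hh₁e s (hmem s hs)]
    have e2' : (∫ s in (0:ℝ)..t, (t₀ / (t₀ + s)) • (∫ u, gradient F (f₂ s - u) ∂μ₀))
        = ∫ s in (0:ℝ)..t, b₂ s :=
      intervalIntegral.integral_congr fun s hs => by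
        simp only [hb₂def, hGdef]
        rw [hh₂e s (hmem s hs)]
    have e3 : (∫ s in (0:ℝ)..t, (1 / (t₀ + s)) • (∫ u in (0:ℝ)..s, gradient F (f₁ s - f₁ u)))
        = ∫ s in (0:ℝ)..t, c₁ s :=
      intervalIntegral.integral_congr fun s hs => by
        have hs' := hmem s hs
        have hsT : s ∈ Icc (0:ℝ) T := hs'
        have hinner : (∫ u in (0:ℝ)..s, gradient F (f₁ s - f₁ u)) = P₁ s := by
          simp only [hP₁def]
          refine intervalIntegral.integral_congr fun u hu => ?_
          rw [uIcc_of_le hsT.1] at hu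
          have huT : u ∈ Icc (0:ℝ) T := ⟨hu.1, hu.2.trans hsT.2⟩
          rw [hh₁e s hsT, hh₁e u huT]
        simp only [hc₁def]
        rw [hinner]
    have e3' : (∫ s in (0:ℝ)..t, (1 / (t₀ + s)) • (∫ u in (0:ℝ)..s, gradient F (f₂ s - f₂ u)))
        = ∫ s in (0:ℝ)..t, c₂ s :=
      intervalIntegral.integral_congr fun s hs => by
        have hsT : s ∈ Icc (0:ℝ) T := hmem s hs
        have hinner : (∫ u in (0:ℝ)..s, gradient F (f₂ s - f₂ u)) = P₂ s := by
          simp only [hP₂def]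
          refine intervalIntegral.integral_congr fun u hu => ?_
          rw [uIcc_of_le hsT.1] at hu
          have huT : u ∈ Icc (0:ℝ) T := ⟨hu.1, hu.2.trans hsT.2⟩
          rw [hh₂e s hsT, hh₂e u huT]
        simp only [hc₂def]
        rw [hinner]
    rw [hf₁eq t ht, hf₂eq t ht, e1, e1', e2, e2', e3, e3']
    abel
  -- the key integral inequality
  have key : ∀ t ∈ Icc (0:ℝ) T, φ t ≤ K * (∫ s in (0:ℝ)..t, φ s) + δ := by
    intro t ht
    set I : ℝ := ∫ s in (0:ℝ)..t, φ s with hIdef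
    have hI0 : 0 ≤ I := intervalIntegral.integral_nonneg ht.1 fun s _ => hφ0 s
    have huIcc : uIcc (0:ℝ) t ⊆ Icc (0:ℝ) T := by
      rw [uIcc_of_le ht.1]; exact Icc_subset_Icc le_rfl ht.2
    have hia₁ : IntervalIntegrable (fun s => gradient V (h₁ s)) volume 0 t :=
      (hgVc.comp hh₁c).intervalIntegrable 0 t
    have hia₂ : IntervalIntegrable (fun s => gradient V (h₂ s)) volume 0 t :=
      (hgVc.comp hh₂c).intervalIntegrable 0 t
    have hib₁ : IntervalIntegrable b₁ volume 0 t := (hb₁cont.mono huIcc).intervalIntegrable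
    have hib₂ : IntervalIntegrable b₂ volume 0 t := (hb₂cont.mono huIcc).intervalIntegrable
    have hic₁ : IntervalIntegrable c₁ volume 0 t := (hc₁cont.mono huIcc).intervalIntegrable
    have hic₂ : IntervalIntegrable c₂ volume 0 t := (hc₂cont.mono huIcc).intervalIntegrable
    -- combine integrals
    have hdiff : f₁ t - f₂ t
        = -(∫ s in (0:ℝ)..t, (gradient V (h₁ s) - gradient V (h₂ s)))
          - (∫ s in (0:ℝ)..t, (b₁ s - b₂ s))
          - (∫ s in (0:ℝ)..t, (c₁ s - c₂ s))
          + (g₁ t - g₂ t) := by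
      rw [intervalIntegral.integral_sub hia₁ hia₂, intervalIntegral.integral_sub hib₁ hib₂,
        intervalIntegral.integral_sub hic₁ hic₂]
      exact heq t ht
    -- norm bound
    have hφt : φ t = ‖f₁ t - f₂ t‖ := by
      simp only [hφdef]
      rw [hh₁e t ht, hh₂e t ht]
    have hnorm : φ t
        ≤ (∫ s in (0:ℝ)..t, ‖gradient V (h₁ s) - gradient V (h₂ s)‖)
          + ((∫ s in (0:ℝ)..t, ‖b₁ s - b₂ s‖) + (∫ s in (0:ℝ)..t, ‖c₁ s - c₂ s‖)) + δ := by
      rw [hφt, hdiff]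
      have n1 : ‖-(∫ s in (0:ℝ)..t, (gradient V (h₁ s) - gradient V (h₂ s)))
          - (∫ s in (0:ℝ)..t, (b₁ s - b₂ s)) - (∫ s in (0:ℝ)..t, (c₁ s - c₂ s))
          + (g₁ t - g₂ t)‖
          ≤ ‖∫ s in (0:ℝ)..t, (gradient V (h₁ s) - gradient V (h₂ s))‖
            + ‖∫ s in (0:ℝ)..t, (b₁ s - b₂ s)‖ + ‖∫ s in (0:ℝ)..t, (c₁ s - c₂ s)‖
            + ‖g₁ t - g₂ t‖ := by
        have q1 := norm_add_le (-(∫ s in (0:ℝ)..t, (gradient V (h₁ s) - gradient V (h₂ s)))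
          - (∫ s in (0:ℝ)..t, (b₁ s - b₂ s)) - (∫ s in (0:ℝ)..t, (c₁ s - c₂ s))) (g₁ t - g₂ t)
        have q2 := norm_sub_le (-(∫ s in (0:ℝ)..t, (gradient V (h₁ s) - gradient V (h₂ s)))
          - (∫ s in (0:ℝ)..t, (b₁ s - b₂ s))) (∫ s in (0:ℝ)..t, (c₁ s - c₂ s))
        have q3 := norm_sub_le (-(∫ s in (0:ℝ)..t, (gradient V (h₁ s) - gradient V (h₂ s))))
          (∫ s in (0:ℝ)..t, (b₁ s - b₂ s))
        rw [norm_neg] at q3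
        linarith
      have n2 : ‖∫ s in (0:ℝ)..t, (gradient V (h₁ s) - gradient V (h₂ s))‖
          ≤ ∫ s in (0:ℝ)..t, ‖gradient V (h₁ s) - gradient V (h₂ s)‖ :=
        intervalIntegral.norm_integral_le_integral_norm ht.1
      have n3 : ‖∫ s in (0:ℝ)..t, (b₁ s - b₂ s)‖ ≤ ∫ s in (0:ℝ)..t, ‖b₁ s - b₂ s‖ :=
        intervalIntegral.norm_integral_le_integral_norm ht.1
      have n4 : ‖∫ s in (0:ℝ)..t, (c₁ s - c₂ s)‖ ≤ ∫ s in (0:ℝ)..t, ‖c₁ s - c₂ s‖ :=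
        intervalIntegral.norm_integral_le_integral_norm ht.1
      have n5 := hδ t ht
      linarith
    -- bound for the V term
    have hAint : IntervalIntegrable (fun s => ‖gradient V (h₁ s) - gradient V (h₂ s)‖) volume 0 t :=
      ((hgVc.comp hh₁c).sub (hgVc.comp hh₂c)).norm.intervalIntegrable 0 t
    have hφint : IntervalIntegrable (fun s => LV * φ s) volume 0 t :=
      ((continuous_const.mul hφc : Continuous fun s => LV * φ s)).intervalIntegrable 0 t
    have IA_le : (∫ s in (0:ℝ)..t, ‖gradient V (h₁ s) - gradient V (h₂ s)‖) ≤ LV * I := by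
      have := intervalIntegral.integral_mono_on ht.1 hAint hφint
        (fun s _ => hVlip (h₁ s) (h₂ s))
      rwa [intervalIntegral.integral_const_mul] at this
    -- pointwise bound for the interaction terms
    have hpt : ∀ s ∈ Icc (0:ℝ) t, ‖b₁ s - b₂ s‖ + ‖c₁ s - c₂ s‖ ≤ LF * φ s + LF / t₀ * I := by
      intro s hs
      have hs0 := hs.1
      have hst := hs.2
      have hpos : 0 < t₀ + s := by linarith
      have hb : ‖b₁ s - b₂ s‖ ≤ t₀ / (t₀ + s) * (LF * φ s) := by
        have e : b₁ s - b₂ s = (t₀ / (t₀ + s)) • (G (h₁ s) - G (h₂ s)) := by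
          simp only [hb₁def, hb₂def, smul_sub]
        rw [e, norm_smul, Real.norm_eq_abs, abs_of_pos (by positivity)]
        exact mul_le_mul_of_nonneg_left (hGlip _ _) (by positivity)
      have hIs : (∫ u in (0:ℝ)..s, φ u) ≤ I := by
        have hadd : (∫ u in (0:ℝ)..s, φ u) + (∫ u in s..t, φ u) = I :=
          intervalIntegral.integral_add_adjacent_intervals
            (hφc.intervalIntegrable 0 s) (hφc.intervalIntegrable s t)
        have hnn : 0 ≤ ∫ u in s..t, φ u :=
          intervalIntegral.integral_nonneg hst fun u _ => hφ0 u
        linarith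
      have hinner : ‖P₁ s - P₂ s‖ ≤ s * (LF * φ s) + LF * I := by
        have hsplit : P₁ s - P₂ s
            = ∫ u in (0:ℝ)..s, (gradient F (h₁ s - h₁ u) - gradient F (h₂ s - h₂ u)) := by
          simp only [hP₁def, hP₂def]
          have hq₁ : IntervalIntegrable (fun u => gradient F (h₁ s - h₁ u)) volume 0 s :=
            (hgFc.comp (continuous_const.sub hh₁c)).intervalIntegrable 0 s
          have hq₂ : IntervalIntegrable (fun u => gradient F (h₂ s - h₂ u)) volume 0 s :=
            (hgFc.comp (continuous_const.sub hh₂c)).intervalIntegrable 0 s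
          rw [intervalIntegral.integral_sub hq₁ hq₂]
        have hptu : ∀ u ∈ Icc (0:ℝ) s,
            ‖gradient F (h₁ s - h₁ u) - gradient F (h₂ s - h₂ u)‖ ≤ LF * φ s + LF * φ u := by
          intro u _
          have h2 := hFlip (h₁ s - h₁ u) (h₂ s - h₂ u)
          rw [show h₁ s - h₁ u - (h₂ s - h₂ u) = (h₁ s - h₂ s) - (h₁ u - h₂ u) by abel] at h2
          have h3 : ‖(h₁ s - h₂ s) - (h₁ u - h₂ u)‖ ≤ φ s + φ u := norm_sub_le _ _
          have h4 := mul_le_mul_of_nonneg_left h3 hLF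
          calc ‖gradient F (h₁ s - h₁ u) - gradient F (h₂ s - h₂ u)‖
              ≤ LF * (φ s + φ u) := le_trans h2 h4
            _ = LF * φ s + LF * φ u := by ring
        rw [hsplit]
        calc ‖∫ u in (0:ℝ)..s, (gradient F (h₁ s - h₁ u) - gradient F (h₂ s - h₂ u))‖
            ≤ ∫ u in (0:ℝ)..s, ‖gradient F (h₁ s - h₁ u) - gradient F (h₂ s - h₂ u)‖ :=
              intervalIntegral.norm_integral_le_integral_norm hs0
          _ ≤ ∫ u in (0:ℝ)..s, (LF * φ s + LF * φ u) := by
              refine intervalIntegral.integral_mono_on hs0 ?_ ?_ hptu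
              · exact ((hgFc.comp (continuous_const.sub hh₁c)).sub
                  (hgFc.comp (continuous_const.sub hh₂c))).norm.intervalIntegrable 0 s
              · exact (continuous_const.add ((continuous_const.mul hφc : Continuous fun s => LF * φ s))).intervalIntegrable 0 s
          _ = s * (LF * φ s) + LF * (∫ u in (0:ℝ)..s, φ u) := by
              rw [intervalIntegral.integral_add (f := fun _ => LF * φ s) (g := fun u => LF * φ u) (intervalIntegrable_const)
                (((continuous_const.mul hφc : Continuous fun s => LF * φ s)).intervalIntegrable 0 s),
                intervalIntegral.integral_const, intervalIntegral.integral_const_mul]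
              simp [smul_eq_mul]
          _ ≤ s * (LF * φ s) + LF * I := by
              have := mul_le_mul_of_nonneg_left hIs hLF
              linarith
      have hcb : ‖c₁ s - c₂ s‖ ≤ 1 / (t₀ + s) * (s * (LF * φ s) + LF * I) := by
        have e : c₁ s - c₂ s = (1 / (t₀ + s)) • (P₁ s - P₂ s) := by
          simp only [hc₁def, hc₂def, smul_sub]
        rw [e, norm_smul, Real.norm_eq_abs, abs_of_pos (by positivity)]
        exact mul_le_mul_of_nonneg_left hinner (by positivity)
      have hcomb : t₀ / (t₀ + s) * (LF * φ s) + 1 / (t₀ + s) * (s * (LF * φ s) + LF * I)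
          = LF * φ s + (LF * I) / (t₀ + s) := by
        field_simp
        ring
      have hlast : (LF * I) / (t₀ + s) ≤ LF / t₀ * I := by
        have h1 : 1 / (t₀ + s) ≤ 1 / t₀ := one_div_le_one_div_of_le ht₀ (by linarith)
        calc (LF * I) / (t₀ + s) = (LF * I) * (1 / (t₀ + s)) := by ring
          _ ≤ (LF * I) * (1 / t₀) := mul_le_mul_of_nonneg_left h1 (mul_nonneg hLF hI0)
          _ = LF / t₀ * I := by ring
      linarith
    -- integrate the interaction bound
    have hBCint : IntervalIntegrable (fun s => ‖b₁ s - b₂ s‖ + ‖c₁ s - c₂ s‖) volume 0 t :=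
      ((hib₁.sub hib₂).norm.add (hic₁.sub hic₂).norm)
    have hρint : IntervalIntegrable (fun s => LF * φ s + LF / t₀ * I) volume 0 t :=
      (((continuous_const.mul hφc : Continuous fun s => LF * φ s)).add continuous_const).intervalIntegrable 0 t
    have IBC_le : (∫ s in (0:ℝ)..t, ‖b₁ s - b₂ s‖) + (∫ s in (0:ℝ)..t, ‖c₁ s - c₂ s‖)
        ≤ LF * I + T / t₀ * (LF * I) := by
      have e : (∫ s in (0:ℝ)..t, ‖b₁ s - b₂ s‖) + (∫ s in (0:ℝ)..t, ‖c₁ s - c₂ s‖)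
          = ∫ s in (0:ℝ)..t, (‖b₁ s - b₂ s‖ + ‖c₁ s - c₂ s‖) :=
        (intervalIntegral.integral_add (hib₁.sub hib₂).norm (hic₁.sub hic₂).norm).symm
      rw [e]
      have h1 : (∫ s in (0:ℝ)..t, (‖b₁ s - b₂ s‖ + ‖c₁ s - c₂ s‖))
          ≤ ∫ s in (0:ℝ)..t, (LF * φ s + LF / t₀ * I) :=
        intervalIntegral.integral_mono_on ht.1 hBCint hρint hpt
      have h2 : (∫ s in (0:ℝ)..t, (LF * φ s + LF / t₀ * I)) = LF * I + t * (LF / t₀ * I) := by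
        rw [intervalIntegral.integral_add (f := fun s => LF * φ s) (g := fun _ => LF / t₀ * I) (((continuous_const.mul hφc : Continuous fun s => LF * φ s)).intervalIntegrable 0 t)
          intervalIntegrable_const, intervalIntegral.integral_const_mul,
          intervalIntegral.integral_const]
        simp [smul_eq_mul]
        exact Or.inl rfl
      have h3 : t * (LF / t₀ * I) ≤ T * (LF / t₀ * I) := by
        have : 0 ≤ LF / t₀ * I := mul_nonneg (div_nonneg hLF ht₀.le) hI0
        exact mul_le_mul_of_nonneg_right ht.2 this
      have h4 : T * (LF / t₀ * I) = T / t₀ * (LF * I) := by ring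
      linarith
    calc φ t ≤ (∫ s in (0:ℝ)..t, ‖gradient V (h₁ s) - gradient V (h₂ s)‖)
          + ((∫ s in (0:ℝ)..t, ‖b₁ s - b₂ s‖) + (∫ s in (0:ℝ)..t, ‖c₁ s - c₂ s‖)) + δ := hnorm
      _ ≤ LV * I + (LF * I + T / t₀ * (LF * I)) + δ := by
          have h9 := add_le_add IA_le IBC_le
          linarith
      _ = K * I + δ := by rw [hKdef]; ring
  -- Grönwall
  set Φ : ℝ → ℝ := fun r => ∫ s in (0:ℝ)..r, φ s with hΦdef
  have hΦc : Continuous Φ :=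
    intervalIntegral.continuous_primitive (fun a b => hφc.intervalIntegrable a b) 0
  have hΦ' : ∀ r ∈ Ico (0:ℝ) T, HasDerivWithinAt Φ (φ r) (Ici r) r := by
    intro r _
    exact ((intervalIntegral.integral_hasDerivAt_right (hφc.intervalIntegrable 0 r)
      (hφc.stronglyMeasurableAtFilter volume (nhds r)) hφc.continuousAt)).hasDerivWithinAt
  have hΦnn : ∀ r ∈ Icc (0:ℝ) T, 0 ≤ Φ r := fun r hr =>
    intervalIntegral.integral_nonneg hr.1 fun s _ => hφ0 s
  have hbound : ∀ r ∈ Ico (0:ℝ) T, ‖φ r‖ ≤ K * ‖Φ r‖ + δ := by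
    intro r hr
    have hr' : r ∈ Icc (0:ℝ) T := ⟨hr.1, hr.2.le⟩
    rw [Real.norm_of_nonneg (hφ0 r), Real.norm_of_nonneg (hΦnn r hr')]
    exact key r hr'
  have hgron : ∀ r ∈ Icc (0:ℝ) T, ‖Φ r‖ ≤ gronwallBound 0 K δ (r - 0) := by
    refine norm_le_gronwallBound_of_norm_deriv_right_le hΦc.continuousOn hΦ' ?_ hbound
    simp only [hΦdef]
    simp
  -- conclusion
  intro t ht
  have h1 : ‖f₁ t - f₂ t‖ = φ t := by
    simp only [hφdef]
    rw [hh₁e t ht, hh₂e t ht]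
  rw [h1]
  have h2 : φ t ≤ K * Φ t + δ := key t ht
  have h3 : Φ t ≤ gronwallBound 0 K δ t := by
    have := hgron t ht
    rwa [sub_zero, Real.norm_of_nonneg (hΦnn t ht)] at this
  have h4 : K * Φ t ≤ K * gronwallBound 0 K δ t := mul_le_mul_of_nonneg_left h3 hK0
  have h5 : K * gronwallBound 0 K δ t + δ ≤ δ * Real.exp (K * T) := by
    by_cases hK : K = 0
    · rw [hK]
      simp only [zero_mul, zero_add, Real.exp_zero, mul_one]
      exact le_refl δ
    · rw [gronwallBound_of_K_ne_0 hK]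
      have hKpos : 0 < K := lt_of_le_of_ne hK0 (Ne.symm hK)
      have hexp : Real.exp (K * t) ≤ Real.exp (K * T) :=
        Real.exp_le_exp.2 (mul_le_mul_of_nonneg_left ht.2 hK0)
      have : K * (0 * Real.exp (K * t) + δ / K * (Real.exp (K * t) - 1)) + δ
          = δ * Real.exp (K * t) := by
        field_simp
        ring
      rw [this]
      exact mul_le_mul_of_nonneg_left hexp hδ0
  linarith
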